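/- (Deterministic decomposition of the error of the regularized ratio statistic.) Let Ω be any index set, λ > 0, s > 0, ν > 0, and let η̂, η, σ̂², σ² : Ω → ℝ be functions with |η̂(ω)| ≤ 3ν, σ̂²(ω) ≥ 0, and σ²(ω) ≥ s² for all ω ∈ Ω. Then sup_{ω∈Ω} | η̂(ω)/√(σ̂²(ω) + λ) − η(ω)/√(σ²(ω)) | ≤ (3ν/(√λ s²)) · sup_{ω∈Ω} |σ̂²(ω) − σ²(ω)| + 3νλ/(2s³) + (1/s) · sup_{ω∈Ω} |η̂(ω) − η(ω)|. -/

import Mathlib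

open MeasureTheory Filter

set_option maxHeartbeats 1000000

lemma sqrt_diff_abs (u v : ℝ) (hu : 0 ≤ u) (hv : 0 ≤ v) :
    |Real.sqrt u - Real.sqrt v| * (Real.sqrt u + Real.sqrt v) = |u - v| := by
  have h1 := Real.sq_sqrt hu
  have h2 := Real.sq_sqrt hv
  have hsum : 0 ≤ Real.sqrt u + Real.sqrt v :=
    add_nonneg (Real.sqrt_nonneg u) (Real.sqrt_nonneg v)
  rw [← abs_of_nonneg hsum, ← abs_mul]
  congr 1
  nlinarith

lemma key (lam s ν a b x y : ℝ) (hlam : 0 < lam) (hs : 0 < s) (hν : 0 < ν)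
    (hx : |x| ≤ 3 * ν) (ha : 0 ≤ a) (hb : s ^ 2 ≤ b) :
    |x / Real.sqrt (a + lam) - y / Real.sqrt b| ≤
      3 * ν / (Real.sqrt lam * s ^ 2) * |a - b| + 3 * ν * lam / (2 * s ^ 3)
        + (1 / s) * |x - y| := by
  have hb0 : (0:ℝ) < b := lt_of_lt_of_le (by positivity) hb
  set sA := Real.sqrt (a + lam) with hsA
  set sB := Real.sqrt b with hsB
  set sBl := Real.sqrt (b + lam) with hsBl
  set sL := Real.sqrt lam with hsL
  have hsL0 : 0 < sL := Real.sqrt_pos.mpr hlam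
  have hsB_ge : s ≤ sB := by
    have := Real.sqrt_le_sqrt hb
    rwa [Real.sqrt_sq hs.le] at this
  have hsB0 : 0 < sB := lt_of_lt_of_le hs hsB_ge
  have hsA_ge : sL ≤ sA := Real.sqrt_le_sqrt (by linarith)
  have hsA0 : 0 < sA := lt_of_lt_of_le hsL0 hsA_ge
  have hsBl_ge : sB ≤ sBl := Real.sqrt_le_sqrt (by linarith)
  have hsBl0 : 0 < sBl := lt_of_lt_of_le hsB0 hsBl_ge
  have hBl_sq : sBl ^ 2 = b + lam := Real.sq_sqrt (by linarith)
  have hB_sq : sB ^ 2 = b := Real.sq_sqrt hb0.le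
  have hdiffBlA : |sBl - sA| * (sBl + sA) = |b + lam - (a + lam)| := by
    simpa using sqrt_diff_abs (b + lam) (a + lam) (by linarith) (by linarith)
  clear_value sA sB sBl sL
  -- term 1
  have t1 : |x / sA - x / sBl| ≤ 3 * ν / (sL * s ^ 2) * |a - b| := by
    have hdiff := hdiffBlA
    have hdiff' : |sBl - sA| ≤ |a - b| / sBl := by
      rw [le_div_iff₀ hsBl0]
      have h1 : |sBl - sA| * sBl ≤ |sBl - sA| * (sBl + sA) := by
        apply mul_le_mul_of_nonneg_left (by linarith) (abs_nonneg _)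
      rw [hdiff] at h1
      calc |sBl - sA| * sBl ≤ |b + lam - (a + lam)| := h1
        _ = |a - b| := by rw [← abs_neg]; ring_nf
    have heq : x / sA - x / sBl = x * (sBl - sA) / (sA * sBl) := by
      field_simp
    rw [heq, abs_div, abs_mul, abs_of_pos (mul_pos hsA0 hsBl0),
      div_le_iff₀ (mul_pos hsA0 hsBl0)]
    have hchain : |x| * |sBl - sA| ≤ 3 * ν * (|a - b| / sBl) :=
      mul_le_mul hx hdiff' (abs_nonneg _) (by positivity)
    have hkey : sL * s ^ 2 ≤ sA * sBl * sBl := by nlinarith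
    calc |x| * |sBl - sA| ≤ 3 * ν * (|a - b| / sBl) := hchain
      _ = (3 * ν * |a - b|) / sBl := by ring
      _ ≤ (3 * ν * |a - b|) * (sA * sBl) / (sL * s ^ 2) := by
          rw [div_le_div_iff₀ hsBl0 (by positivity)]
          nlinarith [mul_le_mul_of_nonneg_left hkey
            (show (0:ℝ) ≤ 3 * ν * |a - b| by positivity)]
      _ = 3 * ν / (sL * s ^ 2) * |a - b| * (sA * sBl) := by ring
  -- term 2
  have t2 : |x / sBl - x / sB| ≤ 3 * ν * lam / (2 * s ^ 3) := by
    have hd : (sBl - sB) * (sBl + sB) = lam := by nlinarith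
    have hd' : sBl - sB ≤ lam / (2 * s) := by
      rw [le_div_iff₀ (by positivity)]
      nlinarith
    have heq : x / sBl - x / sB = x * (sB - sBl) / (sBl * sB) := by
      field_simp
    rw [heq, abs_div, abs_mul, abs_of_pos (mul_pos hsBl0 hsB0),
      div_le_iff₀ (mul_pos hsBl0 hsB0)]
    have habsd : |sB - sBl| = sBl - sB := by
      rw [abs_sub_comm, abs_of_nonneg (by linarith)]
    rw [habsd]
    have h1 : |x| * (sBl - sB) ≤ 3 * ν * (lam / (2 * s)) :=
      mul_le_mul hx hd' (by linarith) (by positivity)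
    calc |x| * (sBl - sB) ≤ 3 * ν * (lam / (2 * s)) := h1
      _ = 3 * ν * lam / (2 * s) := by ring
      _ ≤ 3 * ν * lam * (sBl * sB) / (2 * s ^ 3) := by
          rw [div_le_div_iff₀ (by positivity) (by positivity)]
          have hss : s * s ≤ sBl * sB := by nlinarith
          calc 3 * ν * lam * (2 * s ^ 3) = 3 * ν * lam * (2 * s) * (s * s) := by ring
            _ ≤ 3 * ν * lam * (2 * s) * (sBl * sB) :=
                mul_le_mul_of_nonneg_left hss (by positivity)
            _ = 3 * ν * lam * (sBl * sB) * (2 * s) := by ring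
      _ = 3 * ν * lam / (2 * s ^ 3) * (sBl * sB) := by ring
  -- term 3
  have t3 : |x / sB - y / sB| ≤ (1 / s) * |x - y| := by
    rw [div_sub_div_same, abs_div, abs_of_pos hsB0, div_le_iff₀ hsB0]
    calc |x - y| = 1 / s * (|x - y| * s) := by field_simp
      _ ≤ 1 / s * (|x - y| * sB) := by gcongr
      _ = 1 / s * |x - y| * sB := by ring
  calc |x / sA - y / sB| ≤ |x / sA - x / sBl| + |x / sBl - x / sB| + |x / sB - y / sB| := by
        have := abs_sub_le (x / sA) (x / sBl) (x / sB)
        have := abs_sub_le (x / sA) (x / sB) (y / sB)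
        linarith
    _ ≤ 3 * ν / (sL * s ^ 2) * |a - b| + 3 * ν * lam / (2 * s ^ 3) + (1 / s) * |x - y| := by
        gcongr


/-- Deterministic decomposition of the error of the regularized ratio statistic:
`sup_{ω∈Ω} |η̂/√(σ̂²+λ) − η/√σ²|
  ≤ (3ν/(√λ s²)) sup_{ω∈Ω} |σ̂² − σ²| + 3νλ/(2s³) + (1/s) sup_{ω∈Ω} |η̂ − η|`,
with the suprema taken in `ℝ≥0∞` so that possibly infinite suprema are handled. -/
theorem ratio_error_decomposition {W : Type*} (S : Set W) (lam s ν : ℝ)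
    (hlam : 0 < lam) (hs : 0 < s) (hν : 0 < ν)
    (etaHat eta sigmaHatSq sigmaSq : W → ℝ)
    (hetaHat : ∀ w ∈ S, |etaHat w| ≤ 3 * ν)
    (hsigmaHat : ∀ w ∈ S, 0 ≤ sigmaHatSq w)
    (hsigma : ∀ w ∈ S, s ^ 2 ≤ sigmaSq w) :
    (⨆ w ∈ S, ENNReal.ofReal
        |etaHat w / Real.sqrt (sigmaHatSq w + lam) - eta w / Real.sqrt (sigmaSq w)|) ≤
      ENNReal.ofReal (3 * ν / (Real.sqrt lam * s ^ 2)) *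
          (⨆ w ∈ S, ENNReal.ofReal |sigmaHatSq w - sigmaSq w|)
        + ENNReal.ofReal (3 * ν * lam / (2 * s ^ 3))
        + ENNReal.ofReal (1 / s) * (⨆ w ∈ S, ENNReal.ofReal |etaHat w - eta w|) := by
  refine iSup₂_le fun w hw => ?_
  have hA : (0:ℝ) ≤ 3 * ν / (Real.sqrt lam * s ^ 2) := by positivity
  have hB : (0:ℝ) ≤ 3 * ν * lam / (2 * s ^ 3) := by positivity
  have hC : (0:ℝ) ≤ 1 / s := by positivity
  calc ENNReal.ofReal
        |etaHat w / Real.sqrt (sigmaHatSq w + lam) - eta w / Real.sqrt (sigmaSq w)|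
      ≤ ENNReal.ofReal (3 * ν / (Real.sqrt lam * s ^ 2) * |sigmaHatSq w - sigmaSq w|
          + 3 * ν * lam / (2 * s ^ 3) + (1 / s) * |etaHat w - eta w|) :=
        ENNReal.ofReal_le_ofReal
          (key lam s ν (sigmaHatSq w) (sigmaSq w) (etaHat w) (eta w) hlam hs hν
            (hetaHat w hw) (hsigmaHat w hw) (hsigma w hw))
    _ = ENNReal.ofReal (3 * ν / (Real.sqrt lam * s ^ 2)) *
          ENNReal.ofReal |sigmaHatSq w - sigmaSq w|
        + ENNReal.ofReal (3 * ν * lam / (2 * s ^ 3))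
        + ENNReal.ofReal (1 / s) * ENNReal.ofReal |etaHat w - eta w| := by
        rw [ENNReal.ofReal_add (by positivity) (by positivity),
          ENNReal.ofReal_add (by positivity) hB,
          ENNReal.ofReal_mul hA, ENNReal.ofReal_mul hC]
    _ ≤ _ := by
        gcongr
        · exact le_iSup₂ (f := fun w _ => ENNReal.ofReal |sigmaHatSq w - sigmaSq w|) w hw
        · exact le_iSup₂ (f := fun w _ => ENNReal.ofReal |etaHat w - eta w|) w hw
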